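/- arXiv:2309.06362 — 4 statements merged into one kernel-verified Lean document; each statement's English description precedes it below -/
import Mathlib

section
/- Let G be a finite group in which every element has prime power order (an EPPO-group), let d > 1 be a natural number, and let H be a subgroup of G with gcd(|H|, d) = 1. Then |H| divides the number of elements of order d in G. -/
/-- Conjugation action of a subgroup `H` on the set of elements of order `d`. -/
def conjOrderAction {G : Type*} [Group G] (H : Subgroup G) (d : ℕ) :
    MulAction H {g : G // orderOf g = d} where
  smul h g := ⟨(h : G) * g * (h : G)⁻¹, by
    exact ((show SemiconjBy (h : G) (g : G) ((h : G) * g * (h : G)⁻¹) by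
      unfold SemiconjBy; group).orderOf_eq (h : G)).symm.trans g.2⟩
  one_smul g := by ext; simp [HSMul.hSMul]
  mul_smul h₁ h₂ g := by ext; simp [HSMul.hSMul, mul_assoc]

theorem EPPO_divisibility (G : Type*) [Group G] [Finite G]
    (hEPPO : ∀ g : G, g ≠ 1 → IsPrimePow (orderOf g))
    (d : ℕ) (hd : 1 < d) (H : Subgroup G) (hcop : Nat.Coprime (Nat.card H) d) :
    Nat.card H ∣ Nat.card {g : G // orderOf g = d} := by
  set S := {g : G // orderOf g = d} with hS
  rcases isEmpty_or_nonempty S with hemp | hne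
  · simp [Nat.card_of_isEmpty]
  · obtain ⟨⟨g0, hg0⟩⟩ := hne
    have hg0ne : g0 ≠ 1 := by
      intro h; rw [h, orderOf_one] at hg0; omega
    have hdpp : IsPrimePow d := hg0 ▸ hEPPO g0 hg0ne
    obtain ⟨q, m, hq, hm, hqm⟩ := hdpp
    letI := conjOrderAction H d
    -- the action is free
    have key : ∀ (s : S) (h : H), h • s = s → h = 1 := by
      intro s h hfix
      by_contra hne1
      have hcoe : (h : G) ≠ 1 := fun h1 => hne1 (OneMemClass.coe_eq_one.mp h1)
      have hcomm : Commute (h : G) (s : G) := by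
        have : (h : G) * s * (h : G)⁻¹ = (s : G) := congrArg Subtype.val hfix
        rw [mul_inv_eq_iff_eq_mul] at this
        exact this
      obtain ⟨p, k, hp, hk, hpk⟩ := hEPPO (h : G) hcoe
      have hdvdH : orderOf (h : G) ∣ Nat.card H := by
        rw [Subgroup.orderOf_coe]
        exact orderOf_dvd_natCard h
      have hcop' : Nat.Coprime (orderOf (h : G)) d :=
        Nat.Coprime.coprime_dvd_left hdvdH hcop
      have hordmul : orderOf ((h : G) * s) = orderOf (h : G) * d := by
        rw [hcomm.orderOf_mul_eq_mul_orderOf_of_coprime (by rw [s.2]; exact hcop'), s.2]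
      have hne1' : (h : G) * (s : G) ≠ 1 := by
        intro heq
        have : orderOf ((h : G) * (s : G)) = 1 := by rw [heq, orderOf_one]
        rw [hordmul] at this
        rcases Nat.eq_one_of_mul_eq_one_left this with rfl
        omega
      obtain ⟨r, l, hr, hl, hrl⟩ := hEPPO _ hne1'
      rw [hordmul] at hrl
      have hpr : p = r := by
        have hpd : (p : ℕ) ∣ r ^ l := by
          rw [hrl]
          exact Dvd.dvd.mul_right (dvd_trans (dvd_pow_self p hk.ne') (hpk ▸ dvd_refl _)) d
        exact (Nat.prime_dvd_prime_iff_eq hp.nat_prime hr.nat_prime).mp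
          (hp.nat_prime.dvd_of_dvd_pow hpd)
      have hqr : q = r := by
        have hqd : (q : ℕ) ∣ r ^ l := by
          rw [hrl]
          exact Dvd.dvd.mul_left (dvd_trans (dvd_pow_self q hm.ne') (hqm ▸ dvd_refl _)) _
        exact (Nat.prime_dvd_prime_iff_eq hq.nat_prime hr.nat_prime).mp
          (hq.nat_prime.dvd_of_dvd_pow hqd)
      have hpq : p = q := hpr.trans hqr.symm
      have hp_dvd : (p : ℕ) ∣ orderOf (h : G) := hpk ▸ dvd_pow_self p hk.ne'
      have hq_dvd : (q : ℕ) ∣ d := hqm ▸ dvd_pow_self q hm.ne'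
      have : (p : ℕ) ∣ 1 := hcop' ▸ Nat.dvd_gcd hp_dvd (hpq ▸ hq_dvd)
      exact hp.nat_prime.one_lt.ne' (Nat.dvd_one.mp this)
    -- stabilizers are trivial
    have hstab : ∀ s : S, MulAction.stabilizer H s = ⊥ := by
      intro s
      rw [Subgroup.eq_bot_iff_forall]
      intro h hh
      exact key s h hh
    -- counting
    classical
    haveI : Fintype S := Fintype.ofFinite S
    let e1 := MulAction.selfEquivSigmaOrbitsQuotientStabilizer H S
    have e2 : ∀ ω : MulAction.orbitRel.Quotient H S,
        (H ⧸ MulAction.stabilizer H ω.out) ≃ H := fun ω =>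
      (Subgroup.quotientEquivOfEq (hstab ω.out)).trans
        (QuotientGroup.quotientBot (G := H)).toEquiv
    have e3 : S ≃ (MulAction.orbitRel.Quotient H S) × H :=
      (e1.trans (Equiv.sigmaCongrRight e2)).trans (Equiv.sigmaEquivProd _ _)
    rw [Nat.card_congr e3, Nat.card_prod]
    exact dvd_mul_left _ _
end

section
/- Let G be a finite group and suppose that for every subgroup H of G and every d ∈ π_e(G) with d ≠ 1 and gcd(|H|, d) = 1, the order of H divides the number of elements of order d in G. Then every element of G has prime power order. -/
open Finset

universe u

/-- The set of element orders (spectrum) of a group. -/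
def elementOrders (G : Type*) [Group G] : Set ℕ := {n : ℕ | ∃ g : G, orderOf g = n}

theorem frobenius_hall : ∀ (N : ℕ) (G : Type u) [Group G] [Finite G], Nat.card G = N →
    ∀ n n' : ℕ, N = n * n' → Nat.Coprime n n' → n ∣ Nat.card {g : G // g ^ n = 1} := by
  intro N
  induction N using Nat.strong_induction_on with
  | _ N IH =>
    intro G _ _ hN n n' hnn hco
    classical
    haveI : Fintype G := Fintype.ofFinite G
    have hN0 : N ≠ 0 := by rw [← hN]; exact Nat.card_pos.ne'
    obtain ⟨c₁, hc₁⟩ := Nat.chineseRemainder hco 1 0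
    obtain ⟨c₂, hc₂⟩ := Nat.chineseRemainder hco 0 1
    have hordN : ∀ g : G, orderOf g ∣ n * n' := fun g => hnn ▸ hN ▸ orderOf_dvd_natCard g
    -- basic power lemmas
    have L1 : ∀ g : G, (g ^ c₁) ^ n = 1 := by
      intro g
      rw [← pow_mul, ← orderOf_dvd_iff_pow_eq_one]
      refine (hordN g).trans ?_
      have : n' ∣ c₁ := (Nat.modEq_zero_iff_dvd).mp hc₁.2
      obtain ⟨t, rfl⟩ := this
      ring_nf
      exact Dvd.intro t (by ring)
    have L2 : ∀ g : G, (g ^ c₂) ^ n' = 1 := by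
      intro g
      rw [← pow_mul, ← orderOf_dvd_iff_pow_eq_one]
      refine (hordN g).trans ?_
      have : n ∣ c₂ := (Nat.modEq_zero_iff_dvd).mp hc₂.1
      obtain ⟨t, rfl⟩ := this
      exact ⟨t, by ring⟩
    have hc12 : (c₁ + c₂) ≡ 1 [MOD n * n'] := by
      have h1 : (c₁ + c₂) ≡ 1 [MOD n] := by
        simpa using hc₁.1.add hc₂.1
      have h2 : (c₁ + c₂) ≡ 1 [MOD n'] := by
        simpa using hc₁.2.add hc₂.2
      exact (Nat.modEq_and_modEq_iff_modEq_mul hco).mp ⟨h1, h2⟩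
    have L3 : ∀ g : G, g ^ c₁ * g ^ c₂ = g := by
      intro g
      rw [← pow_add]
      nth_rewrite 2 [show g = g ^ 1 by simp]
      rw [pow_eq_pow_iff_modEq]
      exact hc12.of_dvd (hordN g)
    have L4x : ∀ x v : G, Commute x v → x ^ n = 1 → v ^ n' = 1 → (x * v) ^ c₁ = x := by
      intro x v hcomm hx hv
      rw [hcomm.mul_pow]
      have h1 : x ^ c₁ = x := by
        nth_rewrite 2 [show x = x ^ 1 by simp]
        rw [pow_eq_pow_iff_modEq]
        exact hc₁.1.of_dvd (orderOf_dvd_of_pow_eq_one hx)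
      have h2 : v ^ c₁ = 1 := by
        rw [← orderOf_dvd_iff_pow_eq_one]
        exact (orderOf_dvd_of_pow_eq_one hv).trans ((Nat.modEq_zero_iff_dvd).mp hc₁.2)
      rw [h1, h2, mul_one]
    have L4v : ∀ x v : G, Commute x v → x ^ n = 1 → v ^ n' = 1 → (x * v) ^ c₂ = v := by
      intro x v hcomm hx hv
      rw [hcomm.mul_pow]
      have h1 : x ^ c₂ = 1 := by
        rw [← orderOf_dvd_iff_pow_eq_one]
        exact (orderOf_dvd_of_pow_eq_one hx).trans ((Nat.modEq_zero_iff_dvd).mp hc₂.1)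
      have h2 : v ^ c₂ = v := by
        nth_rewrite 2 [show v = v ^ 1 by simp]
        rw [pow_eq_pow_iff_modEq]
        exact hc₂.2.of_dvd (orderOf_dvd_of_pow_eq_one hv)
      rw [h1, h2, one_mul]
    by_cases hzex : ∃ z : G, z ∈ Subgroup.center G ∧ z ^ n' = 1 ∧ z ≠ 1
    · -- Case 1 : quotient by a central subgroup
      obtain ⟨z, hzc, hzn', hz1⟩ := hzex
      set Z := Subgroup.zpowers z with hZ
      have hZle : Z ≤ Subgroup.center G := (Subgroup.zpowers_le).mpr hzc
      haveI : Z.Normal := by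
        constructor
        intro a ha g
        have : a * g = g * a := ((Subgroup.mem_center_iff.mp (hZle ha)) g).symm
        rw [← this]; simpa using ha
      set Q := G ⧸ Z with hQ
      have hoz0 : orderOf z ≠ 0 := (orderOf_pos z).ne'
      have hoz1 : 1 < orderOf z := by
        have h1 : orderOf z ≠ 1 := fun h => hz1 (orderOf_eq_one_iff.mp h)
        omega
      have hozn' : orderOf z ∣ n' := orderOf_dvd_of_pow_eq_one hzn'
      have hQcard : Nat.card Q * orderOf z = N := by
        rw [← Nat.card_zpowers z, ← hN]
        exact (Subgroup.card_eq_card_quotient_mul_card_subgroup Z).symm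
      obtain ⟨n'', hn''⟩ := hozn'
      have hQN : Nat.card Q = n * n'' := by
        have h1 : Nat.card Q * orderOf z = (n * n'') * orderOf z := by
          rw [hQcard, hnn, hn'']; ring
        exact Nat.eq_of_mul_eq_mul_right (by omega) h1
      have hQlt : Nat.card Q < N := by
        have h2 : 0 < Nat.card Q := Nat.card_pos
        nlinarith [hQcard]
      have hco'' : Nat.Coprime n n'' := hco.coprime_dvd_right ⟨orderOf z, by rw [hn'']; ring⟩
      have hdvdQ : n ∣ Nat.card {y : Q // y ^ n = 1} :=
        IH (Nat.card Q) hQlt Q rfl n n'' hQN hco''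
      -- transfer along the bijection
      have hbij : Nat.card {g : G // g ^ n = 1} = Nat.card {y : Q // y ^ n = 1} := by
        apply Nat.card_eq_of_bijective (fun x => (⟨(x.1 : Q), by
          have h5 : ((x.1 ^ n : G) : Q) = ((1 : G) : Q) := by rw [x.2]
          rw [QuotientGroup.mk_pow] at h5
          simpa using h5⟩ : {y : Q // y ^ n = 1}))
        constructor
        · rintro ⟨x, hx⟩ ⟨x', hx'⟩ hmk
          have hmk' : (x : Q) = (x' : Q) := congrArg Subtype.val hmk
          have hw : x⁻¹ * x' ∈ Z := QuotientGroup.eq.mp hmk'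
          set w := x⁻¹ * x' with hwdef
          have hwc : w ∈ Subgroup.center G := hZle hw
          have hcomm : Commute x w := (Subgroup.mem_center_iff.mp hwc x)
          have hx'w : x' = x * w := by rw [hwdef]; group
          have hwn : w ^ n = 1 := by
            have h6 : (x * w) ^ n = x ^ n * w ^ n := hcomm.mul_pow n
            rw [← hx'w, hx', hx] at h6
            simpa using h6.symm
          have hwn' : w ^ n' = 1 := by
            obtain ⟨k, hk⟩ := Subgroup.mem_zpowers_iff.mp hw
            rw [← hk, ← zpow_natCast, ← zpow_mul, mul_comm, zpow_mul, zpow_natCast, hzn', one_zpow]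
          have hword : orderOf w ∣ Nat.gcd n n' :=
            Nat.dvd_gcd (orderOf_dvd_of_pow_eq_one hwn) (orderOf_dvd_of_pow_eq_one hwn')
          have hw1 : w = 1 := by
            have h9 : orderOf w = 1 := Nat.eq_one_of_dvd_one (hco ▸ hword)
            exact orderOf_eq_one_iff.mp h9
          rw [hwdef] at hw1
          exact Subtype.ext (inv_mul_eq_one.mp hw1)
        · rintro ⟨y, hy⟩
          obtain ⟨g, rfl⟩ := QuotientGroup.mk_surjective y
          refine ⟨⟨g ^ c₁, L1 g⟩, ?_⟩
          have h7 : ((g ^ c₁ : G) : Q) = (g : Q) ^ c₁ := QuotientGroup.mk_pow Z g c₁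
          have h8 : (g : Q) ^ c₁ = (g : Q) ^ 1 := by
            rw [pow_eq_pow_iff_modEq]
            exact hc₁.1.of_dvd (orderOf_dvd_of_pow_eq_one hy)
          apply Subtype.ext
          show ((g ^ c₁ : G) : Q) = (g : Q)
          rw [h7, h8, pow_one]
      rw [hbij]; exact hdvdQ

    · -- Case 2 : counting by conjugacy classes
      push_neg at hzex
      have hz : ∀ z : G, z ∈ Subgroup.center G → z ^ n' = 1 → z = 1 := hzex
      set T : G → ℕ := fun v => (univ.filter (fun x : G => x ∈ Subgroup.centralizer {v} ∧ x ^ n = 1)).card with hT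
      set V : Finset G := univ.filter (fun v : G => v ^ n' = 1) with hV
      -- Step A : decompose G according to the n'-part
      have fiber_eq : ∀ v ∈ V, (univ.filter (fun g : G => g ^ c₂ = v)).card = T v := by
        intro v hv
        have hvn' : v ^ n' = 1 := (mem_filter.mp hv).2
        apply card_nbij' (fun g => g ^ c₁) (fun x => x * v)
        · intro g hg
          have hgv : g ^ c₂ = v := (mem_filter.mp hg).2
          simp only [Finset.mem_coe, mem_filter, mem_univ, true_and]
          constructor
          · rw [Subgroup.mem_centralizer_singleton_iff, ← hgv]
            exact (Commute.pow_pow_self g c₁ c₂)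
          · exact L1 g
        · intro x hx
          obtain ⟨hxc, hxn⟩ := (mem_filter.mp hx).2
          have hcomm : Commute x v := (Subgroup.mem_centralizer_singleton_iff.mp hxc)
          simp only [Finset.mem_coe, mem_filter, mem_univ, true_and]
          exact L4v x v hcomm hxn hvn'
        · intro g hg
          have hgv : g ^ c₂ = v := (mem_filter.mp hg).2
          rw [← hgv]; exact L3 g
        · intro x hx
          obtain ⟨hxc, hxn⟩ := (mem_filter.mp hx).2
          have hcomm : Commute x v := (Subgroup.mem_centralizer_singleton_iff.mp hxc)
          exact L4x x v hcomm hxn hvn'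
      have hstepA : N = ∑ v ∈ V, T v := by
        have h0 : (univ : Finset G).card = ∑ v ∈ V, (univ.filter (fun g : G => g ^ c₂ = v)).card := by
          apply card_eq_sum_card_fiberwise
          intro g _
          simp only [Finset.mem_coe, hV, mem_filter, mem_univ, true_and]
          exact L2 g
        rw [← hN, Nat.card_eq_fintype_card, ← card_univ, h0]
        exact Finset.sum_congr rfl fiber_eq
      -- Step B : the v = 1 term is the count we need
      have h1V : (1 : G) ∈ V := by simp [hV]
      have hstepB : T 1 = (univ.filter (fun x : G => x ^ n = 1)).card := by
        apply Finset.card_nbij' id id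
        · intro x hx
          simp only [Finset.mem_coe, hT, mem_filter, mem_univ, true_and] at hx ⊢
          exact hx.2
        · intro x hx
          simp only [Finset.mem_coe, hT, mem_filter, mem_univ, true_and] at hx ⊢
          refine ⟨?_, hx⟩
          rw [Subgroup.mem_centralizer_singleton_iff, one_mul, mul_one]
        · intro a _; rfl
        · intro a _; rfl
      -- Step C : nontrivial classes
      have hconjpow : ∀ (u x : G) (k : ℕ), (u * x * u⁻¹) ^ k = u * x ^ k * u⁻¹ := by
        intro u x k
        induction k with
        | zero => group
        | succ k ih => rw [pow_succ, ih, pow_succ]; group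
      have hstepC : n ∣ ∑ v ∈ V.erase 1, T v := by
        haveI : Fintype (ConjClasses G) := Fintype.ofFinite _
        rw [← Finset.sum_fiberwise_of_maps_to (g := fun v : G => ConjClasses.mk v)
          (t := (univ : Finset (ConjClasses G))) (fun v _ => mem_univ _) T]
        apply Finset.dvd_sum
        intro c _
        rcases ((V.erase 1).filter (fun v => ConjClasses.mk v = c)).eq_empty_or_nonempty with he | ⟨v₀, hv₀⟩
        · rw [he]; simp
        · have hv₀W : v₀ ∈ V.erase 1 := (mem_filter.mp hv₀).1
          have hv₀c : ConjClasses.mk v₀ = c := (mem_filter.mp hv₀).2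
          have hv₀n' : v₀ ^ n' = 1 := (mem_filter.mp (Finset.mem_of_mem_erase hv₀W)).2
          have hv₀1 : v₀ ≠ 1 := Finset.ne_of_mem_erase hv₀W
          have hfib : (V.erase 1).filter (fun v => ConjClasses.mk v = c)
              = univ.filter (fun v => IsConj v₀ v) := by
            ext v
            constructor
            · intro hv
              have h1 := (mem_filter.mp hv).2
              rw [← hv₀c] at h1
              simp only [mem_filter, mem_univ, true_and]
              exact isConj_comm.mp (ConjClasses.mk_eq_mk_iff_isConj.mp h1)
            · intro hv
              have hconj : IsConj v₀ v := (mem_filter.mp hv).2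
              obtain ⟨u, hu⟩ := isConj_iff.mp hconj
              have hvn' : v ^ n' = 1 := by rw [← hu, hconjpow, hv₀n']; group
              have hv1 : v ≠ 1 := by
                intro hv1
                apply hv₀1
                rw [hv1] at hu
                have h9 : v₀ = u⁻¹ * 1 * u := by rw [← hu]; group
                simpa using h9
              have hmk : ConjClasses.mk v = c := by
                rw [← hv₀c]
                exact ConjClasses.mk_eq_mk_iff_isConj.mpr (isConj_comm.mp hconj)
              exact mem_filter.mpr ⟨Finset.mem_erase.mpr ⟨hv1, mem_filter.mpr ⟨mem_univ _, hvn'⟩⟩, hmk⟩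
          have hTconst : ∀ v, IsConj v₀ v → T v = T v₀ := by
            intro v hconj
            obtain ⟨u, hu⟩ := isConj_iff.mp hconj
            simp only [hT]
            apply card_nbij' (fun x => u⁻¹ * x * u) (fun y => u * y * u⁻¹)
            · intro x hx
              obtain ⟨hxc, hxn⟩ := (mem_filter.mp hx).2
              have hxv : x * v = v * x := Subgroup.mem_centralizer_singleton_iff.mp hxc
              simp only [Finset.mem_coe, mem_filter, mem_univ, true_and]
              constructor
              · rw [Subgroup.mem_centralizer_singleton_iff]
                have : u⁻¹ * x * u * v₀ = u⁻¹ * (x * (u * v₀ * u⁻¹)) * u := by group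
                rw [this, hu, hxv, ← hu]
                group
              · have : u⁻¹ * x * u = u⁻¹ * x * u⁻¹⁻¹ := by rw [inv_inv]
                rw [this, hconjpow, hxn, ← inv_inv u]
                group
            · intro y hy
              obtain ⟨hyc, hyn⟩ := (mem_filter.mp hy).2
              have hyv : y * v₀ = v₀ * y := Subgroup.mem_centralizer_singleton_iff.mp hyc
              simp only [Finset.mem_coe, mem_filter, mem_univ, true_and]
              constructor
              · rw [Subgroup.mem_centralizer_singleton_iff, ← hu]
                have h1 : u * y * u⁻¹ * (u * v₀ * u⁻¹) = u * (y * v₀) * u⁻¹ := by group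
                have h2 : u * v₀ * u⁻¹ * (u * y * u⁻¹) = u * (v₀ * y) * u⁻¹ := by group
                rw [h1, h2, hyv]
              · rw [hconjpow, hyn]; group
            · intro x _; group
            · intro y _; group
          rw [hfib, Finset.sum_congr rfl (fun v hv => hTconst v ((mem_filter.mp hv).2)),
            Finset.sum_const, smul_eq_mul]
          -- orbit-stabilizer
          set C := Subgroup.centralizer ({v₀} : Set G) with hC
          set Nc := Nat.card C with hNc
          have hcardclass : (univ.filter (fun v => IsConj v₀ v)).card * Nc = N := by
            have h1 : (univ.filter (fun v => IsConj v₀ v)).card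
                = Nat.card (MulAction.orbit (ConjAct G) v₀) := by
              rw [← Fintype.card_subtype]
              rw [Nat.card_eq_fintype_card]
              apply Fintype.card_congr
              apply Equiv.subtypeEquivRight
              intro v
              rw [ConjAct.mem_orbit_conjAct]
              exact ⟨isConj_comm.mp, isConj_comm.mp⟩
            have h2 : Nat.card (MulAction.orbit (ConjAct G) v₀)
                * Nat.card (MulAction.stabilizer (ConjAct G) v₀) = Nat.card (ConjAct G) := by
              rw [Nat.card_congr (MulAction.orbitEquivQuotientStabilizer (ConjAct G) v₀)]
              exact (Subgroup.card_eq_card_quotient_mul_card_subgroup _).symm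
            have h3 : Nat.card (MulAction.stabilizer (ConjAct G) v₀) = Nc := by
              apply Nat.card_congr
              refine ⟨fun s => ⟨ConjAct.ofConjAct s.1, ?_⟩, fun x => ⟨ConjAct.toConjAct x.1, ?_⟩, ?_, ?_⟩
              · have hs := s.2
                rw [MulAction.mem_stabilizer_iff, ConjAct.smul_def] at hs
                show ConjAct.ofConjAct s.1 ∈ Subgroup.centralizer {v₀}
                rw [Subgroup.mem_centralizer_singleton_iff]
                calc ConjAct.ofConjAct s.1 * v₀
                    = ConjAct.ofConjAct s.1 * v₀ * (ConjAct.ofConjAct s.1)⁻¹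
                      * ConjAct.ofConjAct s.1 := by group
                  _ = v₀ * ConjAct.ofConjAct s.1 := by rw [hs]
              · have hx : (x.1 : G) * v₀ = v₀ * x.1 :=
                  Subgroup.mem_centralizer_singleton_iff.mp x.2
                rw [MulAction.mem_stabilizer_iff, ConjAct.smul_def, ConjAct.ofConjAct_toConjAct]
                calc x.1 * v₀ * x.1⁻¹ = v₀ * x.1 * x.1⁻¹ := by rw [hx]
                  _ = v₀ := by group
              · intro s; apply Subtype.ext; simp
              · intro x; apply Subtype.ext; simp
            rw [h1, ← h3, h2, ← hN]
            exact Nat.card_congr ConjAct.ofConjAct.toEquiv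
          -- apply the induction hypothesis to the centralizer
          have hCne : C ≠ ⊤ := by
            intro htop
            apply hv₀1
            apply hz v₀ _ hv₀n'
            rw [hC] at htop
            rw [Subgroup.centralizer_eq_top_iff_subset] at htop
            exact htop rfl
          have hNcdvd : Nc ∣ N := hN ▸ Subgroup.card_subgroup_dvd_card C
          have hNcpos : 0 < Nc := Nat.card_pos
          have hNclt : Nc < N := by
            rcases Nat.lt_or_ge Nc N with h | h
            · exact h
            · exfalso
              apply hCne
              apply Subgroup.eq_top_of_card_eq
              have := Nat.le_of_dvd (Nat.pos_of_ne_zero hN0) hNcdvd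
              omega
          set m := Nat.gcd Nc n with hm
          set m' := Nat.gcd Nc n' with hm'
          have hmm' : m * m' = Nc :=
            (Nat.gcd_mul_gcd_eq_iff_dvd_mul_of_coprime hco).mpr (hnn ▸ hNcdvd)
          have hcopm : Nat.Coprime m m' :=
            Nat.Coprime.coprime_dvd_left (Nat.gcd_dvd_right Nc n)
              (Nat.Coprime.coprime_dvd_right (Nat.gcd_dvd_right Nc n') hco)
          have hIH : m ∣ Nat.card {x : C // x ^ m = 1} :=
            IH Nc hNclt C rfl m m' hmm'.symm hcopm
          have hTvN : T v₀ = Nat.card {x : C // x ^ m = 1} := by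
            simp only [hT]
            rw [← Fintype.card_subtype, Nat.card_eq_fintype_card]
            apply Fintype.card_congr
            refine ⟨fun x => ⟨⟨x.1, x.2.1⟩, ?_⟩, fun y => ⟨y.1.1, y.1.2, ?_⟩, ?_, ?_⟩
            · have hordn : orderOf x.1 ∣ n := orderOf_dvd_of_pow_eq_one x.2.2
              have hordC : orderOf x.1 ∣ Nc := Subgroup.orderOf_dvd_natCard C x.2.1
              have hordm : orderOf x.1 ∣ m := Nat.dvd_gcd hordC hordn
              apply Subtype.ext
              show (x.1 : G) ^ m = 1
              exact orderOf_dvd_iff_pow_eq_one.mp hordm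
            · have h6 : (y.1 : G) ^ m = 1 := by
                have h7 := y.2
                have h8 : ((y.1 ^ m : C) : G) = ((1 : C) : G) := by rw [h7]
                simpa using h8
              have hordm : orderOf (y.1 : G) ∣ m := orderOf_dvd_of_pow_eq_one h6
              exact orderOf_dvd_iff_pow_eq_one.mp (hordm.trans (Nat.gcd_dvd_right Nc n))
            · intro x; rfl
            · intro y; rfl
          obtain ⟨k, hk⟩ := Nat.gcd_dvd_right Nc n'
          have hdvdT : m ∣ T v₀ := by rw [hTvN]; exact hIH
          obtain ⟨s, hs⟩ := hdvdT
          have hm'0 : 0 < m' := by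
            rcases Nat.eq_zero_or_pos m' with h0 | hpos
            · rw [h0, mul_zero] at hmm'; omega
            · exact hpos
          have hKm : (univ.filter (fun v => IsConj v₀ v)).card * m = n * k := by
            apply Nat.eq_of_mul_eq_mul_right hm'0
            calc (univ.filter (fun v => IsConj v₀ v)).card * m * m'
                = (univ.filter (fun v => IsConj v₀ v)).card * (m * m') := by ring
              _ = N := by rw [hmm']; exact hcardclass
              _ = n * k * m' := by rw [hnn, hk]; ring
          refine ⟨k * s, ?_⟩
          rw [hs]
          calc (univ.filter (fun v => IsConj v₀ v)).card * (m * s)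
              = ((univ.filter (fun v => IsConj v₀ v)).card * m) * s := by ring
            _ = n * (k * s) := by rw [hKm]; ring
      -- Conclusion
      have hsplit : N = T 1 + ∑ v ∈ V.erase 1, T v := by
        rw [hstepA, ← Finset.add_sum_erase V T h1V]
      have hndvdN : n ∣ N := hnn ▸ Dvd.intro n' rfl
      have : n ∣ T 1 := by
        have h2 : T 1 = N - ∑ v ∈ V.erase 1, T v := by omega
        rw [h2]
        exact Nat.dvd_sub hndvdN hstepC
      rw [Nat.card_eq_fintype_card, Fintype.card_subtype, ← hstepB]
      exact this


theorem card_pow_eq_one_cong {G : Type u} [Group G] [Finite G] (L m : ℕ) (hL : L ≠ 0)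
    (hdvd : ∀ dd : ℕ, dd ∣ L → dd ≠ 1 → m ∣ Nat.card {g : G // orderOf g = dd}) :
    ∃ K, Nat.card {g : G // g ^ L = 1} = 1 + m * K := by
  classical
  haveI : Fintype G := Fintype.ofFinite G
  rw [Nat.card_eq_fintype_card, Fintype.card_subtype]
  have h0 : (univ.filter (fun g : G => g ^ L = 1)).card
      = ∑ d ∈ L.divisors, ((univ.filter (fun g : G => g ^ L = 1)).filter
          (fun g => orderOf g = d)).card := by
    apply card_eq_sum_card_fiberwise
    intro g hg
    exact Nat.mem_divisors.mpr ⟨orderOf_dvd_of_pow_eq_one (mem_filter.mp hg).2, hL⟩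
  have hfib : ∀ d ∈ L.divisors, ((univ.filter (fun g : G => g ^ L = 1)).filter
      (fun g => orderOf g = d)).card = (univ.filter (fun g : G => orderOf g = d)).card := by
    intro d hd
    congr 1
    ext g
    simp only [mem_filter, mem_univ, true_and]
    constructor
    · rintro ⟨_, h2⟩; exact h2
    · intro h2
      refine ⟨?_, h2⟩
      rw [← orderOf_dvd_iff_pow_eq_one, h2]
      exact (Nat.mem_divisors.mp hd).1
  have h1L : (1 : ℕ) ∈ L.divisors := Nat.one_mem_divisors.mpr hL
  have hone : (univ.filter (fun g : G => orderOf g = 1)).card = 1 := by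
    rw [show (univ.filter (fun g : G => orderOf g = 1)) = {1} from ?_, card_singleton]
    ext g
    simp [orderOf_eq_one_iff]
  have hrest : m ∣ ∑ d ∈ L.divisors.erase 1, (univ.filter (fun g : G => orderOf g = d)).card := by
    apply Finset.dvd_sum
    intro d hd
    have hd1 : d ≠ 1 := Finset.ne_of_mem_erase hd
    have hddvd : d ∣ L := (Nat.mem_divisors.mp (Finset.mem_of_mem_erase hd)).1
    have := hdvd d hddvd hd1
    rwa [Nat.card_eq_fintype_card, Fintype.card_subtype] at this
  obtain ⟨K, hK⟩ := hrest
  refine ⟨K, ?_⟩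
  rw [h0, Finset.sum_congr rfl hfib, ← Finset.add_sum_erase _ _ h1L, hone, hK]

theorem no_elem_order_mul_primes {G : Type u} [Group G] [Finite G]
    (h : ∀ (H : Subgroup G) (d : ℕ), d ∈ elementOrders G → d ≠ 1 →
      Nat.Coprime (Nat.card H) d →
      Nat.card H ∣ Nat.card {g : G // orderOf g = d})
    (p q : ℕ) (pp : p.Prime) (qq : q.Prime) (hpq : p ≠ q)
    (x : G) (hx : orderOf x = p * q) : False := by
  classical
  haveI : Fintype G := Fintype.ofFinite G
  set N := Nat.card G with hNdef
  have hN0 : N ≠ 0 := Nat.card_pos.ne'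
  set P := p ^ N.factorization p with hPdef
  set Q := q ^ N.factorization q with hQdef
  set N₁ := ordCompl[p] N with hN₁def
  set N₂ := ordCompl[q] N with hN₂def
  have hPN₁ : P * N₁ = N := Nat.ordProj_mul_ordCompl_eq_self N p
  have hQN₂ : Q * N₂ = N := Nat.ordProj_mul_ordCompl_eq_self N q
  have hN₁0 : N₁ ≠ 0 := (Nat.ordCompl_pos p hN0).ne'
  have hN₂0 : N₂ ≠ 0 := (Nat.ordCompl_pos q hN0).ne'
  have hpN₁ : ¬ p ∣ N₁ := Nat.not_dvd_ordCompl pp hN0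
  have hqN₂ : ¬ q ∣ N₂ := Nat.not_dvd_ordCompl qq hN0
  set M := ordCompl[q] N₁ with hMdef
  have hQM : Q * M = N₁ := by
    have h1 : ordProj[q] N₁ * ordCompl[q] N₁ = N₁ := Nat.ordProj_mul_ordCompl_eq_self N₁ q
    have h2 : N₁.factorization q = N.factorization q := by
      rw [hN₁def, Nat.factorization_ordCompl N p]
      exact Finsupp.erase_ne (fun hh : q = p => hpq hh.symm)
    rw [hQdef, ← h2]
    exact h1
  have hP0 : P ≠ 0 := pow_ne_zero _ pp.pos.ne'
  have hQ0 : Q ≠ 0 := pow_ne_zero _ qq.pos.ne'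
  have hM0 : M ≠ 0 := by
    intro h0
    rw [h0, mul_zero] at hQM
    exact hN₁0 hQM.symm
  have hN₂PM : N₂ = P * M := by
    have h3 : Q * N₂ = Q * (P * M) := by
      rw [hQN₂, ← hPN₁, ← hQM]; ring
    exact Nat.eq_of_mul_eq_mul_left (Nat.pos_of_ne_zero hQ0) h3
  -- coprimality facts
  have hcopPN₁ : Nat.Coprime P N₁ := Nat.Coprime.pow_left _ (Nat.coprime_ordCompl pp hN0)
  have hcopQN₂ : Nat.Coprime Q N₂ := Nat.Coprime.pow_left _ (Nat.coprime_ordCompl qq hN0)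
  have hMdvdN₁ : M ∣ N₁ := ⟨Q, by rw [← hQM]; ring⟩
  have hMdvdN₂ : M ∣ N₂ := ⟨P, by rw [hN₂PM]; ring⟩
  have hcopPM : Nat.Coprime P M := hcopPN₁.coprime_dvd_right hMdvdN₁
  have hqM : ¬ q ∣ M := Nat.not_dvd_ordCompl qq hN₁0
  have hcopQM : Nat.Coprime Q M :=
    Nat.Coprime.pow_left _ ((Nat.Prime.coprime_iff_not_dvd qq).mpr hqM)
  have hcopPQ : Nat.Coprime P Q :=
    Nat.Coprime.pow _ _ ((Nat.coprime_primes pp qq).mpr hpq)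
  -- Sylow subgroups give divisibility of the order-counts
  haveI : Fact p.Prime := ⟨pp⟩
  haveI : Fact q.Prime := ⟨qq⟩
  obtain ⟨Sp⟩ : Nonempty (Sylow p G) := inferInstance
  obtain ⟨Sq⟩ : Nonempty (Sylow q G) := inferInstance
  have hSpcard : Nat.card (Sp : Subgroup G) = P := Sp.card_eq_multiplicity
  have hSqcard : Nat.card (Sq : Subgroup G) = Q := Sq.card_eq_multiplicity
  have hPd : ∀ dd : ℕ, ¬ p ∣ dd → dd ≠ 1 → P ∣ Nat.card {g : G // orderOf g = dd} := by
    intro dd hpdd hdd1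
    rcases isEmpty_or_nonempty {g : G // orderOf g = dd} with hE | hNE
    · rw [Nat.card_of_isEmpty]
      exact dvd_zero P
    · obtain ⟨⟨g₀, hg₀⟩⟩ := hNE
      have hmem : dd ∈ elementOrders G := ⟨g₀, hg₀⟩
      have hcop : Nat.Coprime (Nat.card (Sp : Subgroup G)) dd := by
        rw [hSpcard]
        exact Nat.Coprime.pow_left _ ((Nat.Prime.coprime_iff_not_dvd pp).mpr hpdd)
      have h4 := h Sp dd hmem hdd1 hcop
      rwa [hSpcard] at h4
  have hQd : ∀ dd : ℕ, ¬ q ∣ dd → dd ≠ 1 → Q ∣ Nat.card {g : G // orderOf g = dd} := by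
    intro dd hqdd hdd1
    rcases isEmpty_or_nonempty {g : G // orderOf g = dd} with hE | hNE
    · rw [Nat.card_of_isEmpty]
      exact dvd_zero Q
    · obtain ⟨⟨g₀, hg₀⟩⟩ := hNE
      have hmem : dd ∈ elementOrders G := ⟨g₀, hg₀⟩
      have hcop : Nat.Coprime (Nat.card (Sq : Subgroup G)) dd := by
        rw [hSqcard]
        exact Nat.Coprime.pow_left _ ((Nat.Prime.coprime_iff_not_dvd qq).mpr hqdd)
      have h4 := h Sq dd hmem hdd1 hcop
      rwa [hSqcard] at h4
  -- the three element counts and their congruences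
  obtain ⟨Ka, hKa⟩ : ∃ K, Nat.card {g : G // g ^ N₁ = 1} = 1 + P * K := by
    apply card_pow_eq_one_cong N₁ P hN₁0
    intro dd hdvd h1
    exact hPd dd (fun hp' => hpN₁ (hp'.trans hdvd)) h1
  obtain ⟨Kb, hKb⟩ : ∃ K, Nat.card {g : G // g ^ N₂ = 1} = 1 + Q * K := by
    apply card_pow_eq_one_cong N₂ Q hN₂0
    intro dd hdvd h1
    exact hQd dd (fun hq' => hqN₂ (hq'.trans hdvd)) h1
  obtain ⟨Kc, hKc⟩ : ∃ K, Nat.card {g : G // g ^ M = 1} = 1 + (P * Q) * K := by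
    apply card_pow_eq_one_cong M (P * Q) hM0
    intro dd hdvd h1
    have hP' := hPd dd (fun hp' => hpN₁ ((hp'.trans hdvd).trans hMdvdN₁)) h1
    have hQ' := hQd dd (fun hq' => hqM (hq'.trans hdvd)) h1
    exact hcopPQ.mul_dvd_of_dvd_of_dvd hP' hQ'
  -- Frobenius divisibility
  have hfa : N₁ ∣ Nat.card {g : G // g ^ N₁ = 1} :=
    frobenius_hall N G hNdef.symm N₁ P (by rw [← hPN₁]; ring) hcopPN₁.symm
  have hfb : N₂ ∣ Nat.card {g : G // g ^ N₂ = 1} :=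
    frobenius_hall N G hNdef.symm N₂ Q (by rw [← hQN₂]; ring) hcopQN₂.symm
  have hfm : M ∣ Nat.card {g : G // g ^ M = 1} :=
    frobenius_hall N G hNdef.symm M (P * Q) (by rw [← hPN₁, ← hQM]; ring)
      (Nat.Coprime.mul_right hcopPM.symm hcopQM.symm)
  -- Finset versions of the counts
  set Sa : Finset G := univ.filter (fun g : G => ¬ p ∣ orderOf g) with hSa
  set Sb : Finset G := univ.filter (fun g : G => ¬ q ∣ orderOf g) with hSb
  set Sd : Finset G := univ.filter (fun g : G => p ∣ orderOf g ∧ q ∣ orderOf g) with hSd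
  have hordN : ∀ g : G, orderOf g ∣ N := fun g => orderOf_dvd_natCard g
  have hcharP : ∀ g : G, g ^ N₁ = 1 ↔ ¬ p ∣ orderOf g := by
    intro g
    constructor
    · intro hg hpord
      exact hpN₁ (hpord.trans (orderOf_dvd_of_pow_eq_one hg))
    · intro hg
      rw [← orderOf_dvd_iff_pow_eq_one]
      have h5 : orderOf g ∣ P * N₁ := hPN₁ ▸ hordN g
      have hcop : Nat.Coprime (orderOf g) P :=
        Nat.Coprime.pow_right _ ((Nat.Prime.coprime_iff_not_dvd pp).mpr hg).symm
      exact hcop.dvd_of_dvd_mul_left h5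
  have hcharQ : ∀ g : G, g ^ N₂ = 1 ↔ ¬ q ∣ orderOf g := by
    intro g
    constructor
    · intro hg hqord
      exact hqN₂ (hqord.trans (orderOf_dvd_of_pow_eq_one hg))
    · intro hg
      rw [← orderOf_dvd_iff_pow_eq_one]
      have h5 : orderOf g ∣ Q * N₂ := hQN₂ ▸ hordN g
      have hcop : Nat.Coprime (orderOf g) Q :=
        Nat.Coprime.pow_right _ ((Nat.Prime.coprime_iff_not_dvd qq).mpr hg).symm
      exact hcop.dvd_of_dvd_mul_left h5
  have hcharM : ∀ g : G, g ^ M = 1 ↔ (¬ p ∣ orderOf g ∧ ¬ q ∣ orderOf g) := by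
    intro g
    constructor
    · intro hg
      have hdvd : orderOf g ∣ M := orderOf_dvd_of_pow_eq_one hg
      exact ⟨fun hp' => hpN₁ ((hp'.trans hdvd).trans hMdvdN₁),
        fun hq' => hqM (hq'.trans hdvd)⟩
    · rintro ⟨hgp, hgq⟩
      rw [← orderOf_dvd_iff_pow_eq_one]
      have h5 : orderOf g ∣ N₁ := by
        have h5a : g ^ N₁ = 1 := by
          rw [← orderOf_dvd_iff_pow_eq_one]
          have h5b : orderOf g ∣ P * N₁ := hPN₁ ▸ hordN g
          have hcop : Nat.Coprime (orderOf g) P :=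
            Nat.Coprime.pow_right _ ((Nat.Prime.coprime_iff_not_dvd pp).mpr hgp).symm
          exact hcop.dvd_of_dvd_mul_left h5b
        exact orderOf_dvd_of_pow_eq_one h5a
      have h6 : orderOf g ∣ Q * M := hQM ▸ h5
      have hcop : Nat.Coprime (orderOf g) Q :=
        Nat.Coprime.pow_right _ ((Nat.Prime.coprime_iff_not_dvd qq).mpr hgq).symm
      exact hcop.dvd_of_dvd_mul_left h6
  -- identify the Nat.card counts with Finset cards
  have hα : Nat.card {g : G // g ^ N₁ = 1} = Sa.card := by
    rw [← Fintype.card_coe Sa, Nat.card_eq_fintype_card]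
    apply Fintype.card_congr
    apply Equiv.subtypeEquivRight
    intro g
    simp only [Finset.mem_coe, hSa, mem_filter, mem_univ, true_and]
    exact hcharP g
  have hβ : Nat.card {g : G // g ^ N₂ = 1} = Sb.card := by
    rw [← Fintype.card_coe Sb, Nat.card_eq_fintype_card]
    apply Fintype.card_congr
    apply Equiv.subtypeEquivRight
    intro g
    simp only [Finset.mem_coe, hSb, mem_filter, mem_univ, true_and]
    exact hcharQ g
  have hγ : Nat.card {g : G // g ^ M = 1} = (univ.filter
      (fun g : G => ¬ p ∣ orderOf g ∧ ¬ q ∣ orderOf g)).card := by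
    rw [← Fintype.card_coe, Nat.card_eq_fintype_card]
    apply Fintype.card_congr
    apply Equiv.subtypeEquivRight
    intro g
    simp only [Finset.mem_coe, mem_filter, mem_univ, true_and]
    exact hcharM g
  -- inclusion–exclusion
  have hinter : Sa ∩ Sb = univ.filter (fun g : G => ¬ p ∣ orderOf g ∧ ¬ q ∣ orderOf g) := by
    ext g
    simp [hSa, hSb, Finset.mem_inter]
  have hunion : (Sa ∪ Sb)ᶜ = Sd := by
    ext g
    simp only [Finset.mem_compl, Finset.mem_union, hSa, hSb, hSd, mem_filter, mem_univ, true_and]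
    push_neg
    simp
  have hie : (Sa ∪ Sb).card + (Sa ∩ Sb).card = Sa.card + Sb.card :=
    Finset.card_union_add_card_inter Sa Sb
  have hcompl : (Sa ∪ Sb).card + Sd.card = N := by
    have h10 := Finset.card_add_card_compl (Sa ∪ Sb)
    rw [hunion] at h10
    rw [hNdef, Nat.card_eq_fintype_card]
    exact h10
  -- main equation : N + γcount = α + β + δ
  set Ac := Nat.card {g : G // g ^ N₁ = 1} with hAc
  set Bc := Nat.card {g : G // g ^ N₂ = 1} with hBc
  set Cc := Nat.card {g : G // g ^ M = 1} with hCc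
  have hmain : N + Cc = Ac + Bc + Sd.card := by
    rw [hα, hβ, hγ, ← hinter]
    omega
  -- divisibility of Sd.card
  have hPdvdN : P ∣ N := ⟨N₁, hPN₁.symm⟩
  have hQdvdN : Q ∣ N := ⟨N₂, hQN₂.symm⟩
  have hMdvdN : M ∣ N := hMdvdN₁.trans ⟨P, by rw [← hPN₁]; ring⟩
  have hPdvdBc : P ∣ Bc := by
    have h7 : P ∣ N₂ := ⟨M, hN₂PM⟩
    exact h7.trans hfb
  have hQdvdAc : Q ∣ Ac := by
    have h7 : Q ∣ N₁ := ⟨M, hQM.symm⟩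
    exact h7.trans hfa
  have hMdvdAc : M ∣ Ac := hMdvdN₁.trans hfa
  have hMdvdBc : M ∣ Bc := hMdvdN₂.trans hfb
  have hPdelta : (P : ℤ) ∣ (Sd.card : ℤ) := by
    have h9 : (N : ℤ) + (Cc : ℤ) = (Ac : ℤ) + (Bc : ℤ) + (Sd.card : ℤ) := by
      exact_mod_cast hmain
    have heq : (Sd.card : ℤ) = (N : ℤ) + ((Cc : ℤ) - 1) - ((Ac : ℤ) - 1) - (Bc : ℤ) := by
      linarith
    rw [heq]
    have d1 : (P : ℤ) ∣ (N : ℤ) := Int.natCast_dvd_natCast.mpr hPdvdN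
    have d2 : (P : ℤ) ∣ ((Cc : ℤ) - 1) := by
      rw [hKc]
      refine ⟨(Q : ℤ) * (Kc : ℤ), ?_⟩
      push_cast
      ring
    have d3 : (P : ℤ) ∣ ((Ac : ℤ) - 1) := by
      rw [hKa]
      refine ⟨(Ka : ℤ), ?_⟩
      push_cast
      ring
    have d4 : (P : ℤ) ∣ (Bc : ℤ) := Int.natCast_dvd_natCast.mpr hPdvdBc
    exact dvd_sub (dvd_sub (dvd_add d1 d2) d3) d4
  have hQdelta : (Q : ℤ) ∣ (Sd.card : ℤ) := by
    have h9 : (N : ℤ) + (Cc : ℤ) = (Ac : ℤ) + (Bc : ℤ) + (Sd.card : ℤ) := by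
      exact_mod_cast hmain
    have heq : (Sd.card : ℤ) = (N : ℤ) + ((Cc : ℤ) - 1) - ((Bc : ℤ) - 1) - (Ac : ℤ) := by
      linarith
    rw [heq]
    have d1 : (Q : ℤ) ∣ (N : ℤ) := Int.natCast_dvd_natCast.mpr hQdvdN
    have d2 : (Q : ℤ) ∣ ((Cc : ℤ) - 1) := by
      rw [hKc]
      refine ⟨(P : ℤ) * (Kc : ℤ), ?_⟩
      push_cast
      ring
    have d3 : (Q : ℤ) ∣ ((Bc : ℤ) - 1) := by
      rw [hKb]
      refine ⟨(Kb : ℤ), ?_⟩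
      push_cast
      ring
    have d4 : (Q : ℤ) ∣ (Ac : ℤ) := Int.natCast_dvd_natCast.mpr hQdvdAc
    exact dvd_sub (dvd_sub (dvd_add d1 d2) d3) d4
  have hMdelta : (M : ℤ) ∣ (Sd.card : ℤ) := by
    have h9 : (N : ℤ) + (Cc : ℤ) = (Ac : ℤ) + (Bc : ℤ) + (Sd.card : ℤ) := by
      exact_mod_cast hmain
    have heq : (Sd.card : ℤ) = (N : ℤ) + (Cc : ℤ) - (Ac : ℤ) - (Bc : ℤ) := by
      linarith
    rw [heq]
    have d1 : (M : ℤ) ∣ (N : ℤ) := Int.natCast_dvd_natCast.mpr hMdvdN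
    have d2 : (M : ℤ) ∣ (Cc : ℤ) := Int.natCast_dvd_natCast.mpr hfm
    have d3 : (M : ℤ) ∣ (Ac : ℤ) := Int.natCast_dvd_natCast.mpr hMdvdAc
    have d4 : (M : ℤ) ∣ (Bc : ℤ) := Int.natCast_dvd_natCast.mpr hMdvdBc
    exact dvd_sub (dvd_sub (dvd_add d1 d2) d3) d4
  have hNdelta : N ∣ Sd.card := by
    have hP' : P ∣ Sd.card := Int.natCast_dvd_natCast.mp hPdelta
    have hQ' : Q ∣ Sd.card := Int.natCast_dvd_natCast.mp hQdelta
    have hM' : M ∣ Sd.card := Int.natCast_dvd_natCast.mp hMdelta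
    have hQM' : Q * M ∣ Sd.card := hcopQM.mul_dvd_of_dvd_of_dvd hQ' hM'
    have hcopPQM : Nat.Coprime P (Q * M) := Nat.Coprime.mul_right hcopPQ hcopPM
    have : P * (Q * M) ∣ Sd.card := hcopPQM.mul_dvd_of_dvd_of_dvd hP' hQM'
    rwa [show P * (Q * M) = N by rw [← hPN₁, ← hQM]] at this
  -- Sd is nonempty but not everything
  have hxSd : x ∈ Sd := by
    simp only [hSd, mem_filter, mem_univ, true_and, hx]
    exact ⟨⟨q, rfl⟩, ⟨p, mul_comm p q⟩⟩
  have h1Sd : (1 : G) ∉ Sd := by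
    simp only [hSd, mem_filter, mem_univ, true_and, orderOf_one]
    rintro ⟨hp1, -⟩
    exact pp.ne_one (Nat.dvd_one.mp hp1)
  have hpos : 0 < Sd.card := Finset.card_pos.mpr ⟨x, hxSd⟩
  have hlt : Sd.card < N := by
    have hne : Sd ≠ univ := by
      intro hEq
      exact h1Sd (hEq ▸ mem_univ 1)
    have hle : Sd.card ≤ Fintype.card G := Finset.card_le_univ Sd
    rcases Nat.lt_or_ge Sd.card N with h | hge
    · exact h
    · exfalso
      apply hne
      apply Finset.eq_univ_of_card
      rw [← Nat.card_eq_fintype_card]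
      omega
  exact absurd (Nat.le_of_dvd hpos hNdelta) (by omega)



theorem divisibility_implies_EPPO (G : Type*) [Group G] [Finite G]
    (h : ∀ (H : Subgroup G) (d : ℕ), d ∈ elementOrders G → d ≠ 1 →
      Nat.Coprime (Nat.card H) d →
      Nat.card H ∣ Nat.card {g : G // orderOf g = d}) :
    ∀ g : G, g ≠ 1 → IsPrimePow (orderOf g) := by
  intro g hg
  by_contra hnpp
  set d := orderOf g with hd
  have hd0 : d ≠ 0 := ((isOfFinOrder_of_finite g).orderOf_pos).ne'
  have hd1 : d ≠ 1 := fun h1 => hg (orderOf_eq_one_iff.mp h1)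
  set p := d.minFac with hp
  have pp : p.Prime := Nat.minFac_prime hd1
  have hpd : p ∣ d := Nat.minFac_dvd d
  set e := ordCompl[p] d with he
  have hed : p ^ d.factorization p * e = d := Nat.ordProj_mul_ordCompl_eq_self d p
  have he1 : e ≠ 1 := by
    intro h1
    apply hnpp
    refine ⟨p, d.factorization p, pp.prime, ?_, ?_⟩
    · exact (Nat.Prime.factorization_pos_of_dvd pp hd0 hpd)
    · rw [h1, mul_one] at hed
      exact hed
  have he0 : e ≠ 0 := (Nat.ordCompl_pos p hd0).ne'
  set q := e.minFac with hq
  have qq : q.Prime := Nat.minFac_prime he1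
  have hqe : q ∣ e := Nat.minFac_dvd e
  have hqd : q ∣ d := hqe.trans (Nat.ordCompl_dvd d p)
  have hpe : ¬ p ∣ e := Nat.not_dvd_ordCompl pp hd0
  have hpq : p ≠ q := fun hEq => hpe (hEq ▸ hqe)
  have hcop : Nat.Coprime p q := (Nat.coprime_primes pp qq).mpr hpq
  have hpqd : p * q ∣ d := hcop.mul_dvd_of_dvd_of_dvd hpd hqd
  have hpq0 : 0 < p * q := Nat.mul_pos pp.pos qq.pos
  obtain ⟨k, hk⟩ := hpqd
  have hk0 : d / (p * q) ≠ 0 := by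
    rw [hk, Nat.mul_div_cancel_left _ hpq0]
    intro h0
    rw [h0, mul_zero] at hk
    exact hd0 hk
  have hx : orderOf (g ^ (d / (p * q))) = p * q := by
    have hdvd2 : d / (p * q) ∣ d := Nat.div_dvd_of_dvd ⟨k, hk⟩
    rw [orderOf_pow_of_dvd hk0 (hd ▸ hdvd2)]
    rw [← hd]
    exact Nat.div_div_self ⟨k, hk⟩ hd0
  exact no_elem_order_mul_primes h p q pp qq hpq _ hx
end

section
/- If two finite groups G₁ and G₂ are of the same order type (i.e., |{x ∈ G₁ : x^d = 1}| = |{x ∈ G₂ : x^d = 1}| for every positive integer d) and G₁ is nilpotent, then G₂ is nilpotent. -/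
section Aux

variable {G : Type*} [Group G] [Finite G]

/-- Elements of a Sylow p-subgroup satisfy `x ^ p ^ n = 1` where `n` is the multiplicity. -/
lemma sylow_mem_pow_eq_one {p : ℕ} [Fact p.Prime] (P : Sylow p G) {x : G}
    (hx : x ∈ (P : Subgroup G)) : x ^ p ^ (Nat.card G).factorization p = 1 := by
  have h1 : ((⟨x, hx⟩ : (P : Subgroup G)) : (P : Subgroup G)) ^ Nat.card (P : Subgroup G) = 1 :=
    pow_card_eq_one'
  have h2 : Nat.card (P : Subgroup G) = p ^ (Nat.card G).factorization p :=
    P.card_eq_multiplicity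
  rw [h2] at h1
  have := congrArg (Subgroup.subtype (P : Subgroup G)) h1
  simpa using this

/-- If all Sylow p-subgroups are normal, the solution set of `x ^ p ^ n = 1` is
exactly a Sylow p-subgroup. -/
lemma card_pow_eq_one_of_normal {p : ℕ} [Fact p.Prime]
    (hn : ∀ P : Sylow p G, (P : Subgroup G).Normal) :
    Nat.card {x : G // x ^ p ^ (Nat.card G).factorization p = 1}
      = p ^ (Nat.card G).factorization p := by
  obtain ⟨P⟩ : Nonempty (Sylow p G) := inferInstance
  haveI := Sylow.unique_of_normal P (hn P)
  have hset : {x : G | x ^ p ^ (Nat.card G).factorization p = 1} = (P : Subgroup G) := by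
    ext x
    constructor
    · intro hx
      have hpg : IsPGroup p (Subgroup.zpowers x) := by
        intro g
        refine ⟨(Nat.card G).factorization p, ?_⟩
        obtain ⟨m, hm⟩ := Subgroup.mem_zpowers_iff.mp g.2
        have : (g : G) ^ p ^ (Nat.card G).factorization p = 1 := by
          rw [← hm, ← zpow_natCast, ← zpow_mul, mul_comm, zpow_mul, zpow_natCast, hx,
            one_zpow]
        exact Subtype.ext (by simpa using this)
      obtain ⟨Q, hQ⟩ := hpg.exists_le_sylow
      have : Q = P := Subsingleton.elim _ _
      exact this ▸ hQ (Subgroup.mem_zpowers x)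
    · intro hx
      exact sylow_mem_pow_eq_one P hx
  calc Nat.card {x : G // x ^ p ^ (Nat.card G).factorization p = 1}
      = Nat.card (P : Subgroup G) := by
        exact Nat.card_congr (Equiv.setCongr hset)
    _ = p ^ (Nat.card G).factorization p := P.card_eq_multiplicity

/-- Conversely, if the solution set of `x ^ p ^ n = 1` has exactly `p ^ n` elements,
then every Sylow p-subgroup is normal. -/
lemma sylow_normal_of_card_pow_eq_one {p : ℕ} [Fact p.Prime]
    (hc : Nat.card {x : G // x ^ p ^ (Nat.card G).factorization p = 1}
      = p ^ (Nat.card G).factorization p) (P : Sylow p G) : (P : Subgroup G).Normal := by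
  set n := (Nat.card G).factorization p with hn
  set S : Set G := {x : G | x ^ p ^ n = 1} with hS
  have hfin : S.Finite := Set.toFinite S
  have hsub : ((P : Subgroup G) : Set G) ⊆ S := fun x hx => sylow_mem_pow_eq_one P hx
  have hcardP : Nat.card (P : Subgroup G) = p ^ n := P.card_eq_multiplicity
  have hcards : ((P : Subgroup G) : Set G).ncard = S.ncard := by
    rw [← Nat.card_coe_set_eq, ← Nat.card_coe_set_eq]
    exact hcardP.trans hc.symm
  have heq : ((P : Subgroup G) : Set G) = S :=
    Set.eq_of_subset_of_ncard_le hsub (le_of_eq hcards.symm) hfin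
  constructor
  intro x hx g
  have : (g * x * g⁻¹) ∈ S := by
    have hx' : x ∈ S := heq ▸ hx
    simp only [S, Set.mem_setOf_eq] at hx' ⊢
    rw [conj_pow, hx', mul_one, mul_inv_cancel]
  rwa [← heq] at this

end Aux

/-- Two finite groups are of the same order type if for every positive integer `d`
they have the same number of solutions of `x ^ d = 1`. -/
def SameOrderType (G₁ G₂ : Type*) [Group G₁] [Group G₂] : Prop :=
  ∀ d : ℕ, 0 < d → Nat.card {x : G₁ // x ^ d = 1} = Nat.card {x : G₂ // x ^ d = 1}

theorem same_order_type_nilpotent (G₁ G₂ : Type*) [Group G₁] [Group G₂]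
    [Finite G₁] [Finite G₂] (h : SameOrderType G₁ G₂)
    (hnil : Group.IsNilpotent G₁) : Group.IsNilpotent G₂ := by
  -- the two groups have the same cardinality
  have hcard : Nat.card G₁ = Nat.card G₂ := by
    have h1 : (0:ℕ) < Nat.card G₁ := Nat.card_pos
    have h2 : (0:ℕ) < Nat.card G₂ := Nat.card_pos
    have := h (Nat.card G₁ * Nat.card G₂) (Nat.mul_pos h1 h2)
    have e1 : Nat.card {x : G₁ // x ^ (Nat.card G₁ * Nat.card G₂) = 1} = Nat.card G₁ :=
      Nat.card_congr (Equiv.subtypeUnivEquiv fun x => by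
        rw [pow_mul, pow_card_eq_one', one_pow])
    have e2 : Nat.card {x : G₂ // x ^ (Nat.card G₁ * Nat.card G₂) = 1} = Nat.card G₂ :=
      Nat.card_congr (Equiv.subtypeUnivEquiv fun x => by
        rw [mul_comm, pow_mul, pow_card_eq_one', one_pow])
    rw [e1, e2] at this
    exact this
  -- use the TFAE characterization: nilpotent iff all Sylow subgroups normal
  have hG1 : ∀ (p : ℕ) (_ : Fact p.Prime) (P : Sylow p G₁), (P : Subgroup G₁).Normal :=
    (isNilpotent_of_finite_tfae (G := G₁)).out 0 3 |>.mp hnil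
  refine (isNilpotent_of_finite_tfae (G := G₂)).out 0 3 |>.mpr ?_
  intro p hp P
  haveI := hp
  have key : Nat.card {x : G₂ // x ^ p ^ (Nat.card G₂).factorization p = 1}
      = p ^ (Nat.card G₂).factorization p := by
    have hpos : 0 < p ^ (Nat.card G₂).factorization p :=
      Nat.pow_pos hp.out.pos
    have := h (p ^ (Nat.card G₂).factorization p) hpos
    rw [← this, ← hcard]
    exact card_pow_eq_one_of_normal (hG1 p hp)
  exact sylow_normal_of_card_pow_eq_one key P
end

section
/- A group G satisfies π_e(G) = π_e(A5) = {1,2,3,5} and |G| = |A5| = 60 if and only if G ≅ A5; in particular, any group of order 60 all of whose element orders lie in {1,2,3,5} and which has elements of orders 2, 3, and 5 is simple. -/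
set_option maxRecDepth 10000
set_option linter.unusedSectionVars false

open MulAction Subgroup

namespace A5Aux

variable {G : Type*} [Group G] [Finite G]

instance : Finite (ConjAct G) := Finite.of_equiv G ConjAct.toConjAct.toEquiv

/-- orders multiply for commuting elements of coprime order; contradiction helper -/
lemma no_mix (horders : ∀ g : G, orderOf g ∈ ({1, 2, 3, 5} : Set ℕ)) {a b : G} {p q : ℕ}
    (hc : Commute a b) (ha : orderOf a = p) (hb : orderOf b = q)
    (hco : Nat.Coprime p q) (hpq : (p * q : ℕ) ∉ ({1, 2, 3, 5} : Set ℕ)) : False := by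
  have h := horders (a * b)
  rw [hc.orderOf_mul_eq_mul_orderOf_of_coprime (by rw [ha, hb]; exact hco), ha, hb] at h
  exact hpq h

lemma orderOf_conj (a g : G) : orderOf (g * a * g⁻¹) = orderOf a := by
  have : g * a * g⁻¹ = (MulAut.conj g).toMonoidHom a := rfl
  rw [this, orderOf_injective _ (MulAut.conj g).injective]

/-- conjugation by an element of order 5 normalizing a subgroup of order 4 is trivial -/
lemma conj_fixed {x : G} (hx5 : orderOf x = 5) {T : Subgroup G} (hT : Nat.card T = 4)
    (hnorm : ∀ t ∈ T, x * t * x⁻¹ ∈ T) : ∀ t ∈ T, x * t * x⁻¹ = t := by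
  classical
  haveI : Fintype T := Fintype.ofFinite _
  set F : T → T := fun t => ⟨x * t * x⁻¹, hnorm t t.2⟩ with hF
  have hinj : Function.Injective F := by
    intro a b hab
    apply Subtype.ext
    have : x * (a : G) * x⁻¹ = x * (b : G) * x⁻¹ := congrArg Subtype.val hab
    exact mul_left_cancel (mul_right_cancel this)
  set σ : Equiv.Perm T := Equiv.ofBijective F ((Finite.injective_iff_bijective).mp hinj) with hσ
  have hx5' : x ^ 5 = 1 := by rw [← hx5]; exact pow_orderOf_eq_one x
  have hpt : ∀ t : T, σ (σ (σ (σ (σ t)))) = t := by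
    intro t
    apply Subtype.ext
    show x * (x * (x * (x * (x * (t : G) * x⁻¹) * x⁻¹) * x⁻¹) * x⁻¹) * x⁻¹ = (t : G)
    have : x * (x * (x * (x * (x * (t : G) * x⁻¹) * x⁻¹) * x⁻¹) * x⁻¹) * x⁻¹
        = x ^ 5 * (t : G) * (x ^ 5)⁻¹ := by
      rw [show x * (x * (x * (x * (x * (t : G) * x⁻¹) * x⁻¹) * x⁻¹) * x⁻¹) * x⁻¹
          = (x*x*x*x*x) * (t : G) * (x*x*x*x*x)⁻¹ by group,
        show x*x*x*x*x = x^5 by rw [pow_succ, pow_succ, pow_succ, pow_succ, pow_one]]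
    rw [this, hx5']
    simp
  have hσ5 : σ ^ 5 = 1 := by
    ext t
    have : (σ ^ 5) t = σ (σ (σ (σ (σ t)))) := by
      simp [pow_succ, Equiv.Perm.mul_apply]
    rw [this, hpt]
    rfl
  have hdvd5 : orderOf σ ∣ 5 := orderOf_dvd_of_pow_eq_one hσ5
  have hdvd24 : orderOf σ ∣ 24 := by
    have := orderOf_dvd_natCard σ
    rwa [Nat.card_eq_fintype_card, Fintype.card_perm,
      show Fintype.card T = 4 by rw [← Nat.card_eq_fintype_card, hT],
      show Nat.factorial 4 = 24 from rfl] at this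
  have hσ1 : σ = 1 := by
    have h := Nat.dvd_gcd hdvd5 hdvd24
    norm_num at h
    exact h
  intro t ht
  have hFt : σ ⟨t, ht⟩ = ⟨t, ht⟩ := by rw [hσ1]; rfl
  exact congrArg Subtype.val hFt


lemma stab_commute {t : G} {y : ConjAct G} (hy : y ∈ stabilizer (ConjAct G) t) :
    Commute (ConjAct.ofConjAct y) t := by
  have h := mem_stabilizer_iff.mp hy
  rw [ConjAct.smul_def] at h
  exact mul_inv_eq_iff_eq_mul.mp h

lemma stab_not_dvd (horders : ∀ g : G, orderOf g ∈ ({1, 2, 3, 5} : Set ℕ)) {t : G} {p q : ℕ}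
    (hq : q.Prime) (ht : orderOf t = p) (hco : Nat.Coprime q p)
    (hqp : (q * p : ℕ) ∉ ({1, 2, 3, 5} : Set ℕ)) :
    ¬ q ∣ Nat.card (stabilizer (ConjAct G) t) := by
  intro hdvd
  haveI : Fact q.Prime := ⟨hq⟩
  obtain ⟨y, hy⟩ := exists_prime_orderOf_dvd_card' (G := stabilizer (ConjAct G) t) q hdvd
  have hy' : orderOf ((y : ConjAct G)) = q := (Subgroup.orderOf_coe y).trans hy
  have hb : orderOf (ConjAct.ofConjAct (y : ConjAct G)) = q := by
    rw [← hy']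
    exact orderOf_injective ConjAct.ofConjAct.toMonoidHom (MulEquiv.injective _) _
  exact no_mix horders (stab_commute y.2) hb ht hco hqp

lemma card_conjAct (hG : Nat.card G = 60) : Nat.card (ConjAct G) = 60 := by
  rw [← hG]; exact Nat.card_congr ConjAct.ofConjAct.toEquiv

lemma stab_dvd_sixty (hG : Nat.card G = 60) (t : G) :
    Nat.card (stabilizer (ConjAct G) t) ∣ 60 := by
  rw [← card_conjAct hG]
  exact Subgroup.card_subgroup_dvd_card _

lemma coprime_of_prime_not_dvd {p d : ℕ} (hp : p.Prime) (h : ¬ p ∣ d) : Nat.Coprime d p :=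
  ((Nat.Prime.coprime_iff_not_dvd hp).mpr h).symm

lemma stab_dvd_four (hG : Nat.card G = 60) (horders : ∀ g : G, orderOf g ∈ ({1, 2, 3, 5} : Set ℕ))
    {t : G} (ht : orderOf t = 2) : Nat.card (stabilizer (ConjAct G) t) ∣ 4 := by
  have h3 := stab_not_dvd horders (by norm_num : Nat.Prime 3) ht (by norm_num) (by norm_num)
  have h5 := stab_not_dvd horders (by norm_num : Nat.Prime 5) ht (by norm_num) (by norm_num)
  have h60 := stab_dvd_sixty hG t
  have hco : Nat.Coprime (Nat.card (stabilizer (ConjAct G) t)) 15 := by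
    have := Nat.Coprime.mul_right (coprime_of_prime_not_dvd (by norm_num) h3)
      (coprime_of_prime_not_dvd (by norm_num) h5)
    exact this
  exact hco.dvd_of_dvd_mul_right (by rw [show (4*15 : ℕ) = 60 by norm_num]; exact h60)

lemma stab_dvd_three (hG : Nat.card G = 60) (horders : ∀ g : G, orderOf g ∈ ({1, 2, 3, 5} : Set ℕ))
    {t : G} (ht : orderOf t = 3) : Nat.card (stabilizer (ConjAct G) t) ∣ 3 := by
  have h2 := stab_not_dvd horders (by norm_num : Nat.Prime 2) ht (by norm_num) (by norm_num)
  have h5 := stab_not_dvd horders (by norm_num : Nat.Prime 5) ht (by norm_num) (by norm_num)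
  have h60 := stab_dvd_sixty hG t
  have hco : Nat.Coprime (Nat.card (stabilizer (ConjAct G) t)) 20 := by
    have := Nat.Coprime.mul_right
      ((coprime_of_prime_not_dvd (by norm_num) h2).pow_right 2)
      (coprime_of_prime_not_dvd (by norm_num) h5)
    simpa using this
  exact hco.dvd_of_dvd_mul_right (by rw [show (3*20 : ℕ) = 60 by norm_num]; exact h60)

lemma stab_dvd_five (hG : Nat.card G = 60) (horders : ∀ g : G, orderOf g ∈ ({1, 2, 3, 5} : Set ℕ))
    {t : G} (ht : orderOf t = 5) : Nat.card (stabilizer (ConjAct G) t) ∣ 5 := by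
  have h2 := stab_not_dvd horders (by norm_num : Nat.Prime 2) ht (by norm_num) (by norm_num)
  have h3 := stab_not_dvd horders (by norm_num : Nat.Prime 3) ht (by norm_num) (by norm_num)
  have h60 := stab_dvd_sixty hG t
  have hco : Nat.Coprime (Nat.card (stabilizer (ConjAct G) t)) 12 := by
    have := Nat.Coprime.mul_right
      ((coprime_of_prime_not_dvd (by norm_num) h2).pow_right 2)
      (coprime_of_prime_not_dvd (by norm_num) h3)
    simpa using this
  exact hco.dvd_of_dvd_mul_right (by rw [show (5*12 : ℕ) = 60 by norm_num]; exact h60)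

lemma orbit_stab_card (hG : Nat.card G = 60) (t : G) :
    Nat.card (orbit (ConjAct G) t) * Nat.card (stabilizer (ConjAct G) t) = 60 := by
  classical
  haveI : Fintype (ConjAct G) := Fintype.ofFinite _
  haveI : Fintype (orbit (ConjAct G) t) := Fintype.ofFinite _
  haveI : Fintype (stabilizer (ConjAct G) t) := Fintype.ofFinite _
  have h := MulAction.card_orbit_mul_card_stabilizer_eq_card_group (ConjAct G) t
  rw [← Nat.card_eq_fintype_card, ← Nat.card_eq_fintype_card, ← Nat.card_eq_fintype_card] at h
  rw [h, card_conjAct hG]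

lemma orbit_card_ge (hG : Nat.card G = 60) {t : G} {k : ℕ} (hk : 0 < k)
    (hdvd : Nat.card (stabilizer (ConjAct G) t) ∣ k) :
    60 ≤ Nat.card (orbit (ConjAct G) t) * k := by
  have h := orbit_stab_card hG t
  have hle : Nat.card (stabilizer (ConjAct G) t) ≤ k := Nat.le_of_dvd hk hdvd
  calc 60 = Nat.card (orbit (ConjAct G) t) * Nat.card (stabilizer (ConjAct G) t) := h.symm
    _ ≤ Nat.card (orbit (ConjAct G) t) * k := Nat.mul_le_mul_left _ hle

lemma orbit_orderOf {t a : G} (ha : a ∈ orbit (ConjAct G) t) : orderOf a = orderOf t := by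
  obtain ⟨g, rfl⟩ := ha
  show orderOf (g • t) = orderOf t
  rw [ConjAct.smul_def]
  exact orderOf_conj t (ConjAct.ofConjAct g)


lemma sylow2_card (hG : Nat.card G = 60) (P : Sylow 2 G) :
    Nat.card (P : Subgroup G) = 4 := by
  haveI : Fact (Nat.Prime 2) := ⟨Nat.prime_two⟩
  rw [Sylow.card_eq_multiplicity, hG]
  have hfact : (Nat.factorization 60) 2 = 2 := by
    have h1 : (2:ℕ)^2 ∣ 60 := by norm_num
    have h2 : ¬ (2:ℕ)^3 ∣ 60 := by norm_num
    have a := (Nat.Prime.pow_dvd_iff_le_factorization Nat.prime_two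
      (by norm_num : (60:ℕ) ≠ 0)).mp h1
    have b : ¬ 3 ≤ Nat.factorization 60 2 := fun h =>
      h2 ((Nat.Prime.pow_dvd_iff_le_factorization Nat.prime_two (by norm_num)).mpr h)
    omega
  rw [hfact]; norm_num

lemma sylow2_mem_order (hG : Nat.card G = 60)
    (horders : ∀ g : G, orderOf g ∈ ({1, 2, 3, 5} : Set ℕ)) (P : Sylow 2 G) {a : G}
    (ha : a ∈ (P : Subgroup G)) (h1 : a ≠ 1) : orderOf a = 2 := by
  have hdvd : orderOf a ∣ 4 := by
    have := Subgroup.orderOf_dvd_natCard (P : Subgroup G) ha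
    rwa [sylow2_card hG P] at this
  have hne : orderOf a ≠ 1 := fun h => h1 (orderOf_eq_one_iff.mp h)
  rcases horders a with h | h | h | h
  · exact absurd h hne
  · exact h
  · rw [h] at hdvd; norm_num at hdvd
  · rw [h] at hdvd; norm_num at hdvd

lemma sylow2_comm (hG : Nat.card G = 60) (P : Sylow 2 G) {a b : G}
    (ha : a ∈ (P : Subgroup G)) (hb : b ∈ (P : Subgroup G)) : a * b = b * a := by
  have hcomm := IsPGroup.commutative_of_card_eq_prime_sq
    (G := (P : Subgroup G)) (p := 2) (by rw [sylow2_card hG P]; norm_num)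
  exact congrArg Subtype.val (hcomm ⟨a, ha⟩ ⟨b, hb⟩)

lemma sylow2_map_eq_stab (hG : Nat.card G = 60)
    (horders : ∀ g : G, orderOf g ∈ ({1, 2, 3, 5} : Set ℕ)) (P : Sylow 2 G) {t : G}
    (ht : t ∈ (P : Subgroup G)) (h1 : t ≠ 1) :
    Subgroup.map (ConjAct.toConjAct.toMonoidHom : G →* ConjAct G) (P : Subgroup G)
      = stabilizer (ConjAct G) t := by
  have hinj : Function.Injective (ConjAct.toConjAct.toMonoidHom : G →* ConjAct G) :=
    MulEquiv.injective _
  have hle : Subgroup.map (ConjAct.toConjAct.toMonoidHom : G →* ConjAct G) (P : Subgroup G)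
      ≤ stabilizer (ConjAct G) t := by
    rintro _ ⟨a, ha, rfl⟩
    rw [mem_stabilizer_iff]
    show ConjAct.toConjAct a • t = t
    rw [ConjAct.smul_def, ConjAct.ofConjAct_toConjAct]
    rw [sylow2_comm hG P ha ht]
    group
  have hcardmap : Nat.card (Subgroup.map (ConjAct.toConjAct.toMonoidHom : G →* ConjAct G) (P : Subgroup G)) = 4 := by
    rw [← sylow2_card hG P]
    exact (Nat.card_congr (Subgroup.equivMapOfInjective _ _ hinj).toEquiv).symm
  have hstab : Nat.card (stabilizer (ConjAct G) t) ∣ 4 :=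
    stab_dvd_four hG horders (sylow2_mem_order hG horders P ht h1)
  exact Subgroup.eq_of_le_of_card_ge hle (by
    rw [hcardmap]
    exact Nat.le_of_dvd (by norm_num) hstab)

lemma sylow2_eq_of_mem (hG : Nat.card G = 60)
    (horders : ∀ g : G, orderOf g ∈ ({1, 2, 3, 5} : Set ℕ)) (P Q : Sylow 2 G) {t : G}
    (htP : t ∈ (P : Subgroup G)) (htQ : t ∈ (Q : Subgroup G)) (h1 : t ≠ 1) : P = Q := by
  have h := (sylow2_map_eq_stab hG horders P htP h1).trans
    (sylow2_map_eq_stab hG horders Q htQ h1).symm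
  have := Subgroup.map_injective (f := (ConjAct.toConjAct.toMonoidHom : G →* ConjAct G))
    (MulEquiv.injective _) h
  exact Sylow.ext this


lemma nontrivial_sylow2 (hG : Nat.card G = 60) (P : Sylow 2 G) :
    ∃ t : G, t ∈ (P : Subgroup G) ∧ t ≠ 1 := by
  have : Nontrivial (P : Subgroup G) := by
    rw [← Finite.one_lt_card_iff_nontrivial, sylow2_card hG P]; norm_num
  obtain ⟨t, ht⟩ := exists_ne (1 : (P : Subgroup G))
  exact ⟨t.1, t.2, fun h => ht (Subtype.ext h)⟩

/-- If an element of order 5 normalizes a Sylow 2-subgroup, contradiction. -/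
lemma normalizer_no_five (hG : Nat.card G = 60)
    (horders : ∀ g : G, orderOf g ∈ ({1, 2, 3, 5} : Set ℕ)) (P : Sylow 2 G) {x : G}
    (hx : orderOf x = 5) (hxn : x ∈ (Subgroup.normalizer ((P : Subgroup G) : Set G))) : False := by
  have hnorm : ∀ t ∈ (P : Subgroup G), x * t * x⁻¹ ∈ (P : Subgroup G) := fun t ht =>
    (Subgroup.mem_normalizer_iff.mp hxn t).mp ht
  obtain ⟨t, htP, ht1⟩ := nontrivial_sylow2 hG P
  have hfix := conj_fixed hx (sylow2_card hG P) hnorm t htP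
  have hcomm : Commute x t := mul_inv_eq_iff_eq_mul.mp hfix
  exact no_mix horders hcomm hx (sylow2_mem_order hG horders P htP ht1)
    (by norm_num) (by norm_num)

lemma exists_card_twelve (hG : Nat.card G = 60)
    (horders : ∀ g : G, orderOf g ∈ ({1, 2, 3, 5} : Set ℕ)) :
    ∃ H : Subgroup G, Nat.card H = 12 := by
  classical
  haveI : Fact (Nat.Prime 2) := ⟨Nat.prime_two⟩
  obtain ⟨P⟩ : Nonempty (Sylow 2 G) := inferInstance
  set n := Nat.card (Sylow 2 G) with hn
  clear_value n
  have hPcard : Nat.card (P : Subgroup G) = 4 := sylow2_card hG P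
  have hindex : (P : Subgroup G).index = 15 := by
    have h := Subgroup.card_mul_index (P : Subgroup G)
    rw [hPcard, hG] at h
    omega
  have hdvd : n ∣ 15 := by
    have := P.card_dvd_index
    rw [hindex] at this
    rwa [← hn] at this
  have hnormindex : (Subgroup.normalizer ((P : Subgroup G) : Set G)).index = n := by
    rw [hn]; exact (P.card_eq_index_normalizer).symm
  have hnormcard : Nat.card (Subgroup.normalizer ((P : Subgroup G) : Set G)) * n = 60 := by
    have h := Subgroup.card_mul_index (Subgroup.normalizer ((P : Subgroup G) : Set G))
    rwa [hnormindex, hG] at h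
  have hmem : n ∈ Nat.divisors 15 := Nat.mem_divisors.mpr ⟨hdvd, by norm_num⟩
  have hdivs : Nat.divisors 15 = {1, 3, 5, 15} := by decide
  rw [hdivs] at hmem
  simp only [Finset.mem_insert, Finset.mem_singleton] at hmem
  rcases hmem with rfl | rfl | rfl | rfl
  -- n = 1
  · exfalso
    have hcard : Nat.card (Subgroup.normalizer ((P : Subgroup G) : Set G)) = 60 := by omega
    have h5 : (5 : ℕ) ∣ Nat.card (Subgroup.normalizer ((P : Subgroup G) : Set G)) := by rw [hcard]; norm_num
    haveI : Fact (Nat.Prime 5) := ⟨by norm_num⟩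
    obtain ⟨y, hy⟩ := exists_prime_orderOf_dvd_card' (G := (Subgroup.normalizer ((P : Subgroup G) : Set G))) 5 h5
    exact normalizer_no_five hG horders P ((Subgroup.orderOf_coe y).trans hy) y.2
  -- n = 3
  · exfalso
    have hcard : Nat.card (Subgroup.normalizer ((P : Subgroup G) : Set G)) = 20 := by omega
    have h5 : (5 : ℕ) ∣ Nat.card (Subgroup.normalizer ((P : Subgroup G) : Set G)) := by rw [hcard]; norm_num
    haveI : Fact (Nat.Prime 5) := ⟨by norm_num⟩
    obtain ⟨y, hy⟩ := exists_prime_orderOf_dvd_card' (G := (Subgroup.normalizer ((P : Subgroup G) : Set G))) 5 h5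
    exact normalizer_no_five hG horders P ((Subgroup.orderOf_coe y).trans hy) y.2
  -- n = 5
  · exact ⟨(Subgroup.normalizer ((P : Subgroup G) : Set G)), by omega⟩
  -- n = 15 : counting contradiction
  · exfalso
    haveI : Fintype G := Fintype.ofFinite G
    haveI : Fintype (Sylow 2 G) := Fintype.ofFinite _
    haveI : Fact (Nat.Prime 3) := ⟨by norm_num⟩
    haveI : Fact (Nat.Prime 5) := ⟨by norm_num⟩
    obtain ⟨y3, hy3⟩ := exists_prime_orderOf_dvd_card' (G := G) 3 (by rw [hG]; norm_num)
    obtain ⟨x5, hx5⟩ := exists_prime_orderOf_dvd_card' (G := G) 5 (by rw [hG]; norm_num)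
    haveI : Fintype (orbit (ConjAct G) y3) := Fintype.ofFinite _
    haveI : Fintype (orbit (ConjAct G) x5) := Fintype.ofFinite _
    set A3 : Finset G := (orbit (ConjAct G) y3).toFinset with hA3
    set A5 : Finset G := (orbit (ConjAct G) x5).toFinset with hA5
    have hcardA3 : 20 ≤ A3.card := by
      have h := orbit_card_ge hG (t := y3) (k := 3) (by norm_num)
        (stab_dvd_three hG horders hy3)
      rw [hA3, Set.toFinset_card, ← Nat.card_eq_fintype_card]
      omega
    have hcardA5 : 12 ≤ A5.card := by
      have h := orbit_card_ge hG (t := x5) (k := 5) (by norm_num)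
        (stab_dvd_five hG horders hx5)
      rw [hA5, Set.toFinset_card, ← Nat.card_eq_fintype_card]
      omega
    have hordA3 : ∀ a ∈ A3, orderOf a = 3 := by
      intro a ha
      rw [hA3, Set.mem_toFinset] at ha
      rw [orbit_orderOf ha, hy3]
    have hordA5 : ∀ a ∈ A5, orderOf a = 5 := by
      intro a ha
      rw [hA5, Set.mem_toFinset] at ha
      rw [orbit_orderOf ha, hx5]
    set f : Sylow 2 G → Finset G :=
      fun Q => (((Q : Subgroup G) : Set G).toFinset).erase 1 with hf
    have hfmem : ∀ Q : Sylow 2 G, ∀ a, a ∈ f Q ↔ (a ∈ (Q : Subgroup G) ∧ a ≠ 1) := by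
      intro Q a
      rw [hf]
      simp only [Finset.mem_erase, Set.mem_toFinset, SetLike.mem_coe]
      tauto
    have hfcard : ∀ Q : Sylow 2 G, (f Q).card = 3 := by
      intro Q
      rw [hf]
      have h1 : (1 : G) ∈ ((Q : Subgroup G) : Set G).toFinset := by
        rw [Set.mem_toFinset]; exact (Q : Subgroup G).one_mem
      rw [Finset.card_erase_of_mem h1, Set.toFinset_card, ← Nat.card_eq_fintype_card]
      rw [show Nat.card ((Q : Subgroup G) : Set G) = Nat.card (Q : Subgroup G) from rfl,
        sylow2_card hG Q]
    set B : Finset G := Finset.univ.biUnion f with hB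
    have hcardB : B.card = 45 := by
      rw [hB, Finset.card_biUnion]
      · rw [Finset.sum_congr rfl (fun Q _ => hfcard Q), Finset.sum_const, smul_eq_mul]
        rw [show (Finset.univ : Finset (Sylow 2 G)).card = 15 by
          rw [Finset.card_univ, ← Nat.card_eq_fintype_card, ← hn]]
      · intro Q _ Q' _ hne
        rw [Function.onFun, Finset.disjoint_left]
        intro a haQ haQ'
        rw [hfmem] at haQ haQ'
        exact hne (sylow2_eq_of_mem hG horders Q Q' haQ.1 haQ'.1 haQ.2)
    have hordB : ∀ a ∈ B, orderOf a = 2 := by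
      intro a ha
      rw [hB, Finset.mem_biUnion] at ha
      obtain ⟨Q, _, haQ⟩ := ha
      rw [hfmem] at haQ
      exact sylow2_mem_order hG horders Q haQ.1 haQ.2
    have hd1 : Disjoint A3 A5 := by
      rw [Finset.disjoint_left]
      intro a h3 h5
      have := (hordA3 a h3).symm.trans (hordA5 a h5)
      norm_num at this
    have hd2 : Disjoint (A3 ∪ A5) B := by
      rw [Finset.disjoint_left]
      intro a hu hb
      rcases Finset.mem_union.mp hu with h | h
      · have := (hordA3 a h).symm.trans (hordB a hb); norm_num at this
      · have := (hordA5 a h).symm.trans (hordB a hb); norm_num at this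
    have htotal : (A3 ∪ A5 ∪ B).card ≤ 60 := by
      calc (A3 ∪ A5 ∪ B).card ≤ Fintype.card G := Finset.card_le_univ _
        _ = 60 := by rw [← Nat.card_eq_fintype_card, hG]
    rw [Finset.card_union_of_disjoint hd2, Finset.card_union_of_disjoint hd1, hcardB] at htotal
    omega


noncomputable def permCongrMulEquiv {α β : Type*} (e : α ≃ β) :
    Equiv.Perm α ≃* Equiv.Perm β where
  toEquiv := e.permCongr
  map_mul' σ τ := by
    ext i
    simp [Equiv.permCongr_def]

lemma main_iso (hG : Nat.card G = 60)
    (horders : ∀ g : G, orderOf g ∈ ({1, 2, 3, 5} : Set ℕ)) :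
    Nonempty (G ≃* alternatingGroup (Fin 5)) := by
  classical
  obtain ⟨H, hH⟩ := exists_card_twelve hG horders
  set φ := MulAction.toPermHom G (G ⧸ H) with hφ
  have hkerle : φ.ker ≤ H := by
    rw [← Subgroup.normalCore_eq_ker]
    exact H.normalCore_le
  have hkercard : Nat.card φ.ker ∣ 12 := by
    rw [← hH]
    exact Subgroup.card_dvd_of_le hkerle
  have hkertriv : φ.ker = ⊥ := by
    by_contra hne
    have hcard1 : Nat.card φ.ker ≠ 1 := fun h => hne (Subgroup.card_eq_one.mp h)
    set p := (Nat.card φ.ker).minFac with hp'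
    clear_value p
    have hp : p.Prime := by rw [hp']; exact Nat.minFac_prime hcard1
    haveI : Fact p.Prime := ⟨hp⟩
    have hpdvd : p ∣ Nat.card φ.ker := by rw [hp']; exact Nat.minFac_dvd _
    have hp12 : p ∣ 12 := hpdvd.trans hkercard
    obtain ⟨k, hk⟩ := exists_prime_orderOf_dvd_card' (G := φ.ker) p hpdvd
    have ha : orderOf ((k : G)) = p := (Subgroup.orderOf_coe k).trans hk
    have hsub : (orbit (ConjAct G) (k : G)) ⊆ (φ.ker : Set G) := by
      rintro _ ⟨g, rfl⟩
      show ConjAct.ofConjAct g * (k : G) * (ConjAct.ofConjAct g)⁻¹ ∈ φ.ker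
      exact (MonoidHom.normal_ker φ).conj_mem _ k.2 _
    have horble : Nat.card (orbit (ConjAct G) (k : G)) ≤ 12 := by
      have h1 : Nat.card (orbit (ConjAct G) (k : G)) ≤ Nat.card φ.ker := by
        rw [Nat.card_coe_set_eq, show (Nat.card φ.ker : ℕ)
            = (φ.ker : Set G).ncard from Nat.card_coe_set_eq _]
        exact Set.ncard_le_ncard hsub (Set.toFinite _)
      calc Nat.card (orbit (ConjAct G) (k : G)) ≤ Nat.card φ.ker := h1
        _ ≤ 12 := Nat.le_of_dvd (by norm_num) hkercard
    have hp23 : p = 2 ∨ p = 3 := by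
      have hple : p ≤ 12 := Nat.le_of_dvd (by norm_num) hp12
      have hp2 : 2 ≤ p := hp.two_le
      interval_cases p <;>
        first
          | (left; rfl)
          | (right; rfl)
          | (exfalso; revert hp12; decide)
          | (exfalso; revert hp; decide)
    rcases hp23 with rfl | rfl
    · have := orbit_card_ge hG (t := (k : G)) (k := 4) (by norm_num)
        (stab_dvd_four hG horders ha)
      omega
    · have := orbit_card_ge hG (t := (k : G)) (k := 3) (by norm_num)
        (stab_dvd_three hG horders ha)
      omega
  have hinj : Function.Injective φ := (MonoidHom.ker_eq_bot_iff φ).mp hkertriv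
  have hidx : H.index = 5 := by
    have h := Subgroup.card_mul_index H
    rw [hH, hG] at h
    omega
  haveI : Fintype (G ⧸ H) := Fintype.ofFinite _
  have hqcard : Fintype.card (G ⧸ H) = 5 := by
    rw [← Nat.card_eq_fintype_card]
    exact hidx
  let e : (G ⧸ H) ≃ Fin 5 := Fintype.equivFinOfCardEq hqcard
  let ψ : G →* Equiv.Perm (Fin 5) := (permCongrMulEquiv e).toMonoidHom.comp φ
  have hψinj : Function.Injective ψ :=
    (permCongrMulEquiv e).injective.comp hinj
  have hRcard : Nat.card ψ.range = 60 := by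
    rw [← hG]
    exact (Nat.card_congr (MonoidHom.ofInjective hψinj).toEquiv).symm
  have hpermcard : Nat.card (Equiv.Perm (Fin 5)) = 120 := by
    rw [Nat.card_eq_fintype_card, Fintype.card_perm, Fintype.card_fin]
    rfl
  have hRidx : ψ.range.index = 2 := by
    have h := Subgroup.card_mul_index ψ.range
    rw [hRcard, hpermcard] at h
    omega
  have hAle : alternatingGroup (Fin 5) ≤ ψ.range := by
    rw [← Equiv.Perm.closure_three_cycles_eq_alternating]
    rw [Subgroup.closure_le]
    intro σ hσ
    have h3 : σ ^ 3 = 1 := by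
      rw [← Equiv.Perm.IsThreeCycle.orderOf hσ]
      exact pow_orderOf_eq_one σ
    have hsq : (σ ^ 2) ^ 2 = σ := by
      rw [← pow_mul, show (2 * 2 : ℕ) = 3 + 1 from rfl, pow_succ, h3, one_mul]
    rw [SetLike.mem_coe, ← hsq]
    exact Subgroup.sq_mem_of_index_two hRidx _
  have hAcard : Nat.card (alternatingGroup (Fin 5)) = 60 := by
    have h := two_mul_card_alternatingGroup (α := Fin 5)
    rw [Fintype.card_perm, Fintype.card_fin, ← Nat.card_eq_fintype_card] at h
    have : (Nat.factorial 5) = 120 := rfl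
    rw [this] at h
    omega
  have hReq : ψ.range = alternatingGroup (Fin 5) :=
    (Subgroup.eq_of_le_of_card_ge hAle (by rw [hRcard, hAcard])).symm
  exact ⟨(MonoidHom.ofInjective hψinj).trans (MulEquiv.subgroupCongr hReq)⟩


lemma A5_card : Nat.card (alternatingGroup (Fin 5)) = 60 := by
  have h := two_mul_card_alternatingGroup (α := Fin 5)
  rw [Fintype.card_perm, Fintype.card_fin, ← Nat.card_eq_fintype_card] at h
  have h5 : (Nat.factorial 5) = 120 := rfl
  rw [h5] at h
  omega

lemma A5_order_mem (g : alternatingGroup (Fin 5)) :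
    orderOf g ∈ ({1, 2, 3, 5} : Set ℕ) := by
  have hsign : Equiv.Perm.sign (g : Equiv.Perm (Fin 5)) = 1 :=
    Equiv.Perm.mem_alternatingGroup.mp g.2
  have hdec : ∀ σ : Equiv.Perm (Fin 5), Equiv.Perm.sign σ = 1 →
      (σ ^ 2 = 1 ∨ σ ^ 3 = 1 ∨ σ ^ 5 = 1) := by decide
  rw [← Subgroup.orderOf_coe g]
  rcases hdec _ hsign with h | h | h
  · rcases (Nat.dvd_prime Nat.prime_two).mp (orderOf_dvd_of_pow_eq_one h) with h' | h' <;>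
      simp [h']
  · rcases (Nat.dvd_prime Nat.prime_three).mp (orderOf_dvd_of_pow_eq_one h) with h' | h' <;>
      simp [h']
  · rcases (Nat.dvd_prime (by norm_num : Nat.Prime 5)).mp (orderOf_dvd_of_pow_eq_one h)
      with h' | h' <;> simp [h']

lemma A5_elementOrders : elementOrders (alternatingGroup (Fin 5)) = {1, 2, 3, 5} := by
  ext n
  constructor
  · rintro ⟨g, rfl⟩
    exact A5_order_mem g
  · intro hn
    rcases hn with h | h | h | h
    · exact ⟨1, by rw [h]; exact orderOf_one⟩
    · refine ⟨⟨Equiv.swap 0 1 * Equiv.swap 2 3,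
        Equiv.Perm.mem_alternatingGroup.mpr (by decide)⟩, ?_⟩
      rw [h, Subgroup.orderOf_mk]
      exact orderOf_eq_prime (by decide) (by decide)
    · refine ⟨⟨Equiv.swap 0 1 * Equiv.swap 1 2,
        Equiv.Perm.mem_alternatingGroup.mpr (by decide)⟩, ?_⟩
      rw [h, Subgroup.orderOf_mk]
      exact orderOf_eq_prime (by decide) (by decide)
    · haveI : Fact (Nat.Prime 5) := ⟨by norm_num⟩
      refine ⟨⟨finRotate 5,
        Equiv.Perm.mem_alternatingGroup.mpr (by decide)⟩, ?_⟩
      rw [h, Subgroup.orderOf_mk]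
      exact orderOf_eq_prime (by decide) (by decide)

lemma elementOrders_congr {H : Type*} [Group H] (e : G ≃* H) :
    elementOrders G = elementOrders H := by
  ext n
  constructor
  · rintro ⟨g, rfl⟩
    exact ⟨e g, orderOf_injective e.toMonoidHom e.injective g⟩
  · rintro ⟨h, rfl⟩
    exact ⟨e.symm h, orderOf_injective e.symm.toMonoidHom e.symm.injective h⟩

lemma isSimpleGroup_of_mulEquiv {H : Type*} [Group H] [hs : IsSimpleGroup H]
    (e : G ≃* H) : IsSimpleGroup G := by
  haveI : Nontrivial G := e.toEquiv.nontrivial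
  constructor
  intro N hN
  have hmap : (N.map e.toMonoidHom).Normal := Subgroup.Normal.map hN e.toMonoidHom e.surjective
  rcases IsSimpleGroup.eq_bot_or_eq_top_of_normal _ hmap with h | h
  · left
    exact (Subgroup.map_eq_bot_iff_of_injective _ e.injective).mp h
  · right
    apply Subgroup.map_injective (f := e.toMonoidHom)
      (show Function.Injective ⇑e.toMonoidHom from e.injective)
    rw [h, ← Subgroup.map_top_of_surjective e.toMonoidHom e.surjective]

end A5Aux


theorem A5_two_orders_characterization (G : Type*) [Group G] [Finite G] :
    ((elementOrders G = {1, 2, 3, 5} ∧ Nat.card G = 60) ↔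
        Nonempty (G ≃* alternatingGroup (Fin 5))) ∧
      ((Nat.card G = 60 ∧ (∀ g : G, orderOf g ∈ ({1, 2, 3, 5} : Set ℕ)) ∧
          (∃ g : G, orderOf g = 2) ∧ (∃ g : G, orderOf g = 3) ∧
          (∃ g : G, orderOf g = 5)) → IsSimpleGroup G) := by
  constructor
  · constructor
    · rintro ⟨hset, hcard⟩
      exact A5Aux.main_iso hcard (fun g => hset ▸ ⟨g, rfl⟩)
    · rintro ⟨e⟩
      refine ⟨(A5Aux.elementOrders_congr e).trans A5Aux.A5_elementOrders, ?_⟩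
      rw [Nat.card_congr e.toEquiv, A5Aux.A5_card]
  · rintro ⟨hcard, horders, -⟩
    obtain ⟨e⟩ := A5Aux.main_iso hcard horders
    exact A5Aux.isSimpleGroup_of_mulEquiv e
end
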